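/- For any infinite cardinal κ, the free group F_κ on κ generators can be partitioned into κ pairwise disjoint 4-large subsets, i.e., subsets A each satisfying G = F·A and G = A·F' for some sets F, F' of cardinality at most 3. -/

import Mathlib

open Pointwise Cardinal

set_option linter.unusedSectionVars false

namespace FreeGroupPartitionAux

open FreeGroup


variable {ι : Type*} [DecidableEq ι]

lemma toWord_mk_single_mul (w : FreeGroup ι) (i : ι) (b : Bool)
    (h : ∀ p ∈ w.toWord.head?, ¬(p.1 = i ∧ p.2 = !b)) :
    (FreeGroup.mk [(i, b)] * w).toWord = (i, b) :: w.toWord := by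
  conv_lhs => rw [← FreeGroup.mk_toWord (x := w), FreeGroup.mul_mk]
  rw [FreeGroup.toWord_mk, List.singleton_append, FreeGroup.reduce.cons,
    FreeGroup.reduce_toWord]
  cases hW : w.toWord with
  | nil => rfl
  | cons hd tl =>
      have h2 := h hd (by rw [hW]; rfl)
      simp only [List.casesOn]
      rw [if_neg (by rintro ⟨h3, h4⟩; exact h2 ⟨h3.symm, by simp [h4]⟩)]

lemma invRev_cons (a : ι × Bool) (l : List (ι × Bool)) :
    FreeGroup.invRev (a :: l) = FreeGroup.invRev l ++ [(a.1, !a.2)] := by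
  simp [FreeGroup.invRev]

lemma head?_invRev (l : List (ι × Bool)) :
    (FreeGroup.invRev l).head? = l.getLast?.map (fun p => (p.1, !p.2)) := by
  induction l with
  | nil => rfl
  | cons a t ih =>
      rw [invRev_cons]
      cases t with
      | nil => simp [FreeGroup.invRev]
      | cons b s =>
          have hne : invRev (b :: s) ≠ [] := by
            intro hn
            have := congrArg List.length hn
            simp [FreeGroup.invRev_length] at this
          rw [List.head?_append_of_ne_nil _ hne, ih, List.getLast?_cons_cons]

lemma toWord_mul_mk_single (w : FreeGroup ι) (i : ι) (b : Bool)
    (h : ∀ p ∈ w.toWord.getLast?, ¬(p.1 = i ∧ p.2 = !b)) :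
    (w * FreeGroup.mk [(i, b)]).toWord = w.toWord ++ [(i, b)] := by
  have hinv : (w * FreeGroup.mk [(i, b)])⁻¹ = FreeGroup.mk [(i, !b)] * w⁻¹ := by
    rw [mul_inv_rev, FreeGroup.inv_mk]
    rfl
  have hcond : ∀ p ∈ (w⁻¹).toWord.head?, ¬(p.1 = i ∧ p.2 = !(!b)) := by
    rintro p hp
    rw [FreeGroup.toWord_inv, head?_invRev] at hp
    obtain ⟨q, hq, rfl⟩ := Option.map_eq_some_iff.mp hp
    rintro ⟨h1, h2⟩
    exact h q hq ⟨h1, by simpa using h2⟩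
  have key := toWord_mk_single_mul (w⁻¹) i (!b) hcond
  rw [← hinv] at key
  have : (w * FreeGroup.mk [(i, b)]).toWord
      = FreeGroup.invRev ((w * FreeGroup.mk [(i, b)])⁻¹).toWord := by
    rw [FreeGroup.toWord_inv, FreeGroup.invRev_invRev]
  rw [this, key, invRev_cons, FreeGroup.toWord_inv, FreeGroup.invRev_invRev]
  simp

/-- sign contribution of a letter -/
def sgn (b : Bool) : ℕ := cond b 1 0

@[simp] lemma sgn_true : sgn true = 1 := rfl
@[simp] lemma sgn_false : sgn false = 0 := rfl

/-- the color of a reduced word -/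
def colorList (i₀ : ι) : List (ι × Bool) → ι
  | [] => i₀
  | a :: l =>
      if (l.length + 1 + sgn a.2 + sgn (l.getLastD a).2) % 2 = 1 then a.1
      else (l.getLastD a).1

def color (i₀ : ι) (w : FreeGroup ι) : ι := colorList i₀ w.toWord

lemma color_cons (i₀ : ι) (a : ι × Bool) (l : List (ι × Bool)) :
    colorList i₀ (a :: l) =
      if (l.length + 1 + sgn a.2 + sgn (l.getLastD a).2) % 2 = 1 then a.1
      else (l.getLastD a).1 := rfl

lemma left_cover (i₀ i : ι) (w : FreeGroup ι) :
    color i₀ w = i ∨ color i₀ (FreeGroup.of i * w) = i ∨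
      color i₀ ((FreeGroup.of i)⁻¹ * w) = i := by
  have hof : FreeGroup.of i = FreeGroup.mk [(i, true)] := rfl
  have hofinv : (FreeGroup.of i)⁻¹ = FreeGroup.mk [(i, false)] := by
    rw [hof, FreeGroup.inv_mk]; rfl
  cases hW : w.toWord with
  | nil =>
      right; left
      have hw1 : w = 1 := FreeGroup.toWord_eq_nil_iff.mp hW
      rw [hw1, mul_one, color, FreeGroup.toWord_of, color_cons]
      simp [sgn]
  | cons a t =>
      by_cases ha : a.1 = i
      · -- first letter has index i; use w or (of i)^{±1} * w matching a's sign
        have hmul : (FreeGroup.mk [(i, a.2)] * w).toWord = (i, a.2) :: a :: t := by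
          rw [toWord_mk_single_mul w i a.2 ?_, hW]
          rw [hW]
          rintro p hp ⟨h1, h2⟩
          obtain rfl : a = p := by simpa using hp
          simp at h2
        have hz : ((a :: t).getLastD (i, a.2)) = t.getLastD a := List.getLastD_cons
        by_cases hpar : (t.length + 1 + sgn a.2 + sgn (t.getLastD a).2) % 2 = 1
        · left
          rw [color, hW, color_cons, if_pos hpar, ha]
        · -- use the multiplied word
          have : color i₀ (FreeGroup.mk [(i, a.2)] * w) = i := by
            rw [color, hmul, color_cons, hz, if_pos ?_]
            show ((t.length + 1) + 1 + sgn a.2 + sgn (t.getLastD a).2) % 2 = 1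
            omega
          cases hb : a.2 with
          | true => right; left; rw [hof]; rw [hb] at this; exact this
          | false => right; right; rw [hofinv]; rw [hb] at this; exact this
      · -- first letter index ≠ i : both multiplications are reduced
        have hmul : ∀ b : Bool, (FreeGroup.mk [(i, b)] * w).toWord = (i, b) :: a :: t := by
          intro b
          rw [toWord_mk_single_mul w i b ?_, hW]
          rw [hW]
          rintro p hp ⟨h1, h2⟩
          obtain rfl : a = p := by simpa using hp
          exact ha h1
        have hz : ∀ b : Bool, ((a :: t).getLastD (i, b)) = t.getLastD a :=
          fun b => List.getLastD_cons
        have hcol : ∀ b : Bool, color i₀ (FreeGroup.mk [(i, b)] * w)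
            = if ((a :: t).length + 1 + sgn b + sgn (t.getLastD a).2) % 2 = 1 then i
              else (t.getLastD a).1 := by
          intro b
          rw [color, hmul b, color_cons, hz b]
        by_cases hpar : ((a :: t).length + 1 + 1 + sgn (t.getLastD a).2) % 2 = 1
        · right; left
          rw [hof, hcol true, if_pos (by simpa using hpar)]
        · right; right
          rw [hofinv, hcol false, if_pos ?_]
          simp only [sgn_false, sgn_true, List.length_cons] at hpar ⊢
          omega

lemma getLast?_cons_eq (a : ι × Bool) (t : List (ι × Bool)) :
    (a :: t).getLast? = some (t.getLastD a) := by
  induction t generalizing a with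
  | nil => rfl
  | cons b s ih => rw [List.getLast?_cons_cons, ih, List.getLastD_cons]

lemma right_cover (i₀ i : ι) (w : FreeGroup ι) :
    color i₀ w = i ∨ color i₀ (w * FreeGroup.of i) = i ∨
      color i₀ (w * (FreeGroup.of i)⁻¹) = i := by
  have hof : FreeGroup.of i = FreeGroup.mk [(i, true)] := rfl
  have hofinv : (FreeGroup.of i)⁻¹ = FreeGroup.mk [(i, false)] := by
    rw [hof, FreeGroup.inv_mk]; rfl
  cases hW : w.toWord with
  | nil =>
      right; left
      have hw1 : w = 1 := FreeGroup.toWord_eq_nil_iff.mp hW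
      rw [hw1, one_mul, color, FreeGroup.toWord_of, color_cons]
      simp
  | cons a t =>
      set z := t.getLastD a with hzdef
      by_cases hz1 : z.1 = i
      · -- last letter has index i
        have hmul : (w * FreeGroup.mk [(i, z.2)]).toWord = (a :: t) ++ [(i, z.2)] := by
          rw [toWord_mul_mk_single w i z.2 ?_, hW]
          rw [hW, getLast?_cons_eq]
          rintro p hp ⟨h1, h2⟩
          obtain rfl : z = p := by simpa [hzdef, List.getLastD_eq_getLast?] using hp
          simp at h2
        have hcolmul : color i₀ (w * FreeGroup.mk [(i, z.2)])
            = if ((t ++ [(i, z.2)]).length + 1 + sgn a.2 + sgn z.2) % 2 = 1 then a.1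
              else i := by
          rw [color, hmul, List.cons_append, color_cons, List.getLastD_concat]
        by_cases hpar : (t.length + 1 + sgn a.2 + sgn z.2) % 2 = 1
        · -- then the appended word has even sum: use it
          have : color i₀ (w * FreeGroup.mk [(i, z.2)]) = i := by
            rw [hcolmul, if_neg ?_]
            simp only [List.length_append, List.length_cons, List.length_nil]
            omega
          cases hb : z.2 with
          | true => right; left; rw [hof]; rw [hb] at this; exact this
          | false => right; right; rw [hofinv]; rw [hb] at this; exact this
        · left
          rw [color, hW, color_cons, ← hzdef, if_neg hpar, hz1]
      · -- last letter index ≠ i : both appends are reduced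
        have hmul : ∀ b : Bool, (w * FreeGroup.mk [(i, b)]).toWord = (a :: t) ++ [(i, b)] := by
          intro b
          rw [toWord_mul_mk_single w i b ?_, hW]
          rw [hW, getLast?_cons_eq]
          rintro p hp ⟨h1, h2⟩
          obtain rfl : z = p := by simpa [hzdef, List.getLastD_eq_getLast?] using hp
          exact hz1 h1
        have hcol : ∀ b : Bool, color i₀ (w * FreeGroup.mk [(i, b)])
            = if ((t ++ [(i, b)]).length + 1 + sgn a.2 + sgn b) % 2 = 1 then a.1
              else i := by
          intro b
          rw [color, hmul b, List.cons_append, color_cons, List.getLastD_concat]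
        by_cases hpar : ((t ++ [(i, true)]).length + 1 + sgn a.2 + 1) % 2 = 1
        · right; right
          rw [hofinv, hcol false, if_neg ?_]
          simp only [List.length_append, List.length_cons, List.length_nil, sgn_true,
            sgn_false] at hpar ⊢
          omega
        · right; left
          rw [hof, hcol true, if_neg (by simpa using hpar)]


end FreeGroupPartitionAux

open FreeGroupPartitionAux

theorem free_group_partition_four_large (ι : Type*) (hinf : Cardinal.aleph0 ≤ #ι) :
    ∃ P : ι → Set (FreeGroup ι),
      Pairwise (Function.onFun Disjoint P) ∧
      (⋃ a, P a) = Set.univ ∧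
      ∀ a, (∃ F : Set (FreeGroup ι), #F ≤ 3 ∧ F * P a = Set.univ) ∧
           (∃ F' : Set (FreeGroup ι), #F' ≤ 3 ∧ P a * F' = Set.univ) := by
  classical
  have hne : Nonempty ι := Cardinal.mk_ne_zero_iff.mp (Cardinal.aleph0_pos.trans_le hinf).ne'
  obtain ⟨i₀⟩ := hne
  refine ⟨fun i => {w | color i₀ w = i}, ?_, ?_, ?_⟩
  · intro i j hij
    refine Set.disjoint_left.mpr ?_
    rintro w hwi hwj
    exact hij ((hwi : _ = i).symm.trans hwj)
  · refine Set.eq_univ_iff_forall.mpr fun w => Set.mem_iUnion.mpr ⟨color i₀ w, rfl⟩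
  · intro i
    have hcard : #({1, FreeGroup.of i, (FreeGroup.of i)⁻¹} : Set (FreeGroup ι)) ≤ 3 := by
      calc #({1, FreeGroup.of i, (FreeGroup.of i)⁻¹} : Set (FreeGroup ι))
          ≤ #({FreeGroup.of i, (FreeGroup.of i)⁻¹} : Set (FreeGroup ι)) + 1 :=
            Cardinal.mk_insert_le
        _ ≤ (#({(FreeGroup.of i)⁻¹} : Set (FreeGroup ι)) + 1) + 1 := by
            gcongr; exact Cardinal.mk_insert_le
        _ = 3 := by rw [Cardinal.mk_singleton]; norm_num
    constructor
    · refine ⟨{1, FreeGroup.of i, (FreeGroup.of i)⁻¹}, hcard, ?_⟩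
      refine Set.eq_univ_iff_forall.mpr fun w => ?_
      rw [Set.mem_mul]
      rcases left_cover i₀ i w with h | h | h
      · exact ⟨1, by simp, w, h, one_mul w⟩
      · exact ⟨(FreeGroup.of i)⁻¹, by simp, FreeGroup.of i * w, h, inv_mul_cancel_left _ _⟩
      · exact ⟨FreeGroup.of i, by simp, (FreeGroup.of i)⁻¹ * w, h, mul_inv_cancel_left _ _⟩
    · refine ⟨{1, FreeGroup.of i, (FreeGroup.of i)⁻¹}, hcard, ?_⟩
      refine Set.eq_univ_iff_forall.mpr fun w => ?_
      rw [Set.mem_mul]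
      rcases right_cover i₀ i w with h | h | h
      · exact ⟨w, h, 1, by simp, mul_one w⟩
      · exact ⟨w * FreeGroup.of i, h, (FreeGroup.of i)⁻¹, by simp, mul_inv_cancel_right _ _⟩
      · exact ⟨w * (FreeGroup.of i)⁻¹, h, FreeGroup.of i, by simp, inv_mul_cancel_right _ _⟩
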